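/- Let H be an invertible (n+m)×(n+m) real matrix, and define Ω̃ := {ξ ∈ ℝ^{n+m} : |(H.mulVec ξ)_j| ≤ 1 for all j}. Then the closed Euclidean ball in ℝⁿ of radius 1/‖H‖ centered at 0 (where ‖H‖ is the operator 2-norm) is contained in the image of Ω̃ under the projection onto the first n coordinates. -/

import Mathlib

lemma abs_coord_le_norm {ι : Type*} [Fintype ι] (v : EuclideanSpace ℝ ι) (j : ι) :
    |v j| ≤ ‖v‖ := by
  rw [EuclideanSpace.norm_eq, ← Real.sqrt_sq_eq_abs]
  apply Real.sqrt_le_sqrt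
  have : (v j) ^ 2 = ‖v j‖ ^ 2 := by rw [Real.norm_eq_abs, sq_abs]
  rw [this]
  exact Finset.single_le_sum (fun i _ => sq_nonneg ‖v i‖) (Finset.mem_univ j)

/-- Condition I2) of Theorem 2, point a): for an invertible shape matrix `H`,
the closed Euclidean ball in `ℝⁿ` of radius `1/‖H‖` (operator 2-norm) is
contained in the projection onto the first `n` coordinates of the symmetric
polytope `Ω̃ = {ξ ∈ ℝ^{n+m} : |(Hξ)_j| ≤ 1 ∀ j}`. -/
theorem closedBall_subset_proj_symmetric_polytope
    (n m : ℕ) (H : Matrix (Fin (n + m)) (Fin (n + m)) ℝ) (hH : IsUnit H.det) :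
    Metric.closedBall (0 : EuclideanSpace ℝ (Fin n))
        (1 / ‖Matrix.toEuclideanCLM (𝕜 := ℝ) H‖) ⊆
      (fun ξ : EuclideanSpace ℝ (Fin (n + m)) =>
          (WithLp.toLp 2 (fun i : Fin n => ξ (Fin.castAdd m i)) : EuclideanSpace ℝ (Fin n))) ''
        {ξ : EuclideanSpace ℝ (Fin (n + m)) | ∀ j, |H.mulVec ξ j| ≤ 1} := by
  intro x hx
  rw [Metric.mem_closedBall, dist_zero_right] at hx
  set ξ : EuclideanSpace ℝ (Fin (n + m)) :=
    (WithLp.equiv 2 (Fin (n + m) → ℝ)).symm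
      (fun i => if h : (i : ℕ) < n then x ⟨i, h⟩ else 0) with hξ
  have hproj : (fun i : Fin n => ξ (Fin.castAdd m i)) = x.ofLp := by
    funext i
    show (if h : ((Fin.castAdd m i : Fin (n+m)) : ℕ) < n then x ⟨_, h⟩ else 0) = x i
    rw [dif_pos (show ((Fin.castAdd m i : Fin (n+m)) : ℕ) < n from i.isLt)]
    rfl
  have hnorm : ‖ξ‖ = ‖x‖ := by
    rw [EuclideanSpace.norm_eq, EuclideanSpace.norm_eq]
    congr 1
    rw [Fin.sum_univ_add]
    have h1 : ∀ i : Fin n, ‖ξ (Fin.castAdd m i)‖ ^ 2 = ‖x i‖ ^ 2 := by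
      intro i; rw [congrFun hproj i]
    have h2 : ∀ i : Fin m, ξ (Fin.natAdd n i) = 0 := by
      intro i
      show (if h : ((Fin.natAdd n i : Fin (n+m)) : ℕ) < n then x ⟨_, h⟩ else 0) = 0
      rw [dif_neg (by simp)]
    simp only [h2, norm_zero, ne_eq, OfNat.ofNat_ne_zero, not_false_iff, zero_pow, Finset.sum_const_zero, add_zero]
    exact Finset.sum_congr rfl fun i _ => by rw [congrFun hproj i]
  have hnle : ‖ξ‖ ≤ 1 / ‖Matrix.toEuclideanCLM (𝕜 := ℝ) H‖ := hnorm ▸ hx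
  refine ⟨ξ, ?_, by show WithLp.toLp 2 (fun i : Fin n => ξ (Fin.castAdd m i)) = x; rw [hproj]⟩
  intro j
  have key : H.mulVec ξ j = (Matrix.toEuclideanCLM (𝕜 := ℝ) H ξ) j := by
    have := Matrix.ofLp_toEuclideanCLM (𝕜 := ℝ) H ξ
    have := congrFun this j
    simpa [Matrix.toLin'_apply] using this.symm
  rw [key]
  calc |(Matrix.toEuclideanCLM (𝕜 := ℝ) H ξ) j| ≤ ‖Matrix.toEuclideanCLM (𝕜 := ℝ) H ξ‖ :=
        abs_coord_le_norm _ j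
    _ ≤ ‖Matrix.toEuclideanCLM (𝕜 := ℝ) H‖ * ‖ξ‖ := (Matrix.toEuclideanCLM (𝕜 := ℝ) H).le_opNorm ξ
    _ ≤ ‖Matrix.toEuclideanCLM (𝕜 := ℝ) H‖ * (1 / ‖Matrix.toEuclideanCLM (𝕜 := ℝ) H‖) :=
        mul_le_mul_of_nonneg_left hnle (norm_nonneg _)
    _ = ‖Matrix.toEuclideanCLM (𝕜 := ℝ) H‖ / ‖Matrix.toEuclideanCLM (𝕜 := ℝ) H‖ := by ring
    _ ≤ 1 := div_self_le_one _
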